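/- Let X be a compact Kähler surface, n ∈ H²(X,ℝ) a Kähler class with K = ∫_X n² > 0, and c = √−1. Set A_ℝ = {x ∪ e^{cn} : x ∈ H^even(X,ℝ)} ⊂ H^even(X,ℂ), with increasing filtration 𝒲₁ = ℝ(n + cn²) ⊕ ℝn², 𝒲₂ = 𝒲₃ = 𝒲₁ ⊕ H²_prim(X,ℝ), 𝒲₄ = A_ℝ, and decreasing filtration ℱ² = H⁰(X,ℂ), ℱ¹ = H⁰ ⊕ H², ℱ⁰ = A on A = A_ℝ ⊗ ℂ. Then (𝒲_•, ℱ^•) is an ℝ-mixed Hodge structure on A_ℝ, i.e. ℱ^• induces a pure ℝ-Hodge structure of weight k on each graded piece Gr_k^𝒲 A_ℝ. -/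

import Mathlib

/-- the ℝ-mixed Hodge structure on `A_ℝ = H^even(X,ℝ)·e^{cn}`,
`c = √−1`.  The even cohomology of a compact Kähler surface is modelled
abstractly by a ℂ-algebra `A` with grading `H0 ⊕ H2 ⊕ H4`, integration `intg`,
real structure `conj`, and a real Kähler class `n ∈ H2` with `∫ n² = K > 0`.
With `𝒲_•` and `ℱ^•` as in the paper, `(𝒲_•, ℱ^•)` is an ℝ-mixed Hodge
structure on `A_ℝ`: the `𝒲_l` are ℝ-subspaces of `A_ℝ`, `𝒲` is increasing, `ℱ`
is decreasing, and on each `Gr_k^𝒲` the filtrations `ℱ` and its conjugate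
(with respect to the real structure `A_ℝ`, i.e. `conjAR y = conj y · e^{2cn}`)
are `k`-opposed — the standard criterion for `ℱ` to induce a pure ℝ-Hodge
structure of weight `k` on `Gr_k^𝒲`. -/
theorem stmt9 {A : Type*} [CommRing A] [Algebra ℂ A] [FiniteDimensional ℂ A]
    (H0 H2 H4 : Submodule ℂ A)
    (hsum : H0 ⊔ H2 ⊔ H4 = ⊤)
    (hindep : ∀ a ∈ H0, ∀ x ∈ H2, ∀ y ∈ H4, a + x + y = 0 → a = 0 ∧ x = 0 ∧ y = 0)
    (hH0 : H0 = Submodule.span ℂ {(1 : A)})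
    (hmul22 : ∀ x ∈ H2, ∀ y ∈ H2, x * y ∈ H4)
    (hmul24 : ∀ x ∈ H2, ∀ y ∈ H4, x * y = 0)
    (hmul44 : ∀ x ∈ H4, ∀ y ∈ H4, x * y = 0)
    (intg : A →ₗ[ℂ] ℂ)
    (hint0 : ∀ x ∈ H0 ⊔ H2, intg x = 0)
    (hnondeg : ∀ x : A, (∀ y : A, intg (x * y) = 0) → x = 0)
    -- real structure
    (conj : A →ₗ[ℝ] A)
    (hcc : ∀ x, conj (conj x) = x)
    (hcm : ∀ x y, conj (x * y) = conj x * conj y)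
    (hca : ∀ (z : ℂ) (x : A), conj (z • x) = (starRingEnd ℂ z) • conj x)
    (hc1 : conj 1 = 1)
    (hcH0 : ∀ x ∈ H0, conj x ∈ H0)
    (hcH2 : ∀ x ∈ H2, conj x ∈ H2)
    (hcH4 : ∀ x ∈ H4, conj x ∈ H4)
    -- the Kähler class
    (n : A) (hn : n ∈ H2) (hcn : conj n = n)
    (K : ℝ) (hK : intg (n * n) = (K : ℂ)) (hKpos : 0 < K)
    (hH4 : H4 = Submodule.span ℂ {n * n})
    (hlef : H2 = (H2 ⊓ LinearMap.ker (LinearMap.mulRight ℂ n)) ⊔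
      Submodule.span ℂ {n}) :
    -- e^{cn} with c = √−1 (note n³ = 0)
    let expc : A := 1 + Complex.I • n - (1 / 2 : ℂ) • (n * n)
    -- the real form A_ℝ = H^even(X,ℝ)·e^{cn} and its conjugation
    let Rpts : Submodule ℝ A := LinearMap.ker (conj - LinearMap.id)
    let ARsub : Submodule ℝ A :=
      Submodule.map ((LinearMap.mulRight ℂ expc).restrictScalars ℝ) Rpts
    let conjAR : A →ₗ[ℝ] A :=
      ((LinearMap.mulRight ℂ (expc * expc)).restrictScalars ℝ).comp conj
    let prim : Submodule ℂ A := H2 ⊓ LinearMap.ker (LinearMap.mulRight ℂ n)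
    let primR : Submodule ℝ A := Rpts ⊓ prim.restrictScalars ℝ
    -- the weight filtration 𝒲_• on A_ℝ
    let W : ℤ → Submodule ℝ A := fun l =>
      if l ≤ 0 then ⊥
      else if l = 1 then Submodule.span ℝ {n + Complex.I • (n * n), n * n}
      else if l ≤ 3 then Submodule.span ℝ {n + Complex.I • (n * n), n * n} ⊔ primR
      else ARsub
    -- the Hodge filtration ℱ^• (by cohomological degree)
    let F : ℤ → Submodule ℂ A := fun p =>
      if p ≤ 0 then ⊤ else if p = 1 then H0 ⊔ H2 else if p = 2 then H0 else ⊥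
    -- complexifications 𝒲_l ⊗ ℂ
    let WC : ℤ → Submodule ℂ A := fun l => Submodule.span ℂ (W l : Set A)
    -- (𝒲_•, ℱ^•) is an ℝ-mixed Hodge structure on A_ℝ:
    (∀ l : ℤ, W l ≤ ARsub) ∧
    Monotone W ∧
    Antitone F ∧
    -- for every k, ℱ and its conjAR-conjugate induce on Gr_k^𝒲 a pair of
    -- k-opposed filtrations (pure ℝ-Hodge structure of weight k):
    (∀ k p q : ℤ, p + q = k + 1 →
      ((F p ⊓ WC k).restrictScalars ℝ ⊔
          (Submodule.map conjAR ((F q).restrictScalars ℝ) ⊓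
            (WC k).restrictScalars ℝ) ⊔
          (WC (k - 1)).restrictScalars ℝ
        = (WC k).restrictScalars ℝ) ∧
      ((F p).restrictScalars ℝ ⊓
          Submodule.map conjAR ((F q).restrictScalars ℝ) ⊓
          (WC k).restrictScalars ℝ
        ≤ (WC (k - 1)).restrictScalars ℝ)) := by
  intro expc Rpts ARsub conjAR prim primR W F WC
  -- scalar facts
  have hi : algebraMap ℂ A Complex.I * algebraMap ℂ A Complex.I = -1 := by
    rw [← map_mul, Complex.I_mul_I, map_neg, map_one]
  have h2 : (2 : A) * algebraMap ℂ A (1/2) = 1 := by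
    rw [show (2:A) = algebraMap ℂ A 2 from (map_ofNat _ 2).symm, ← map_mul]; norm_num
  -- basic algebra facts
  have h1H0 : (1 : A) ∈ H0 := by rw [hH0]; exact Submodule.mem_span_singleton_self 1
  have hm4 : n * n ∈ H4 := hmul22 n hn n hn
  have hn3 : n * (n * n) = 0 := hmul24 n hn _ hm4
  have hn4 : (n * n) * (n * n) = 0 := hmul44 _ hm4 _ hm4
  have hnn0 : n * n ≠ 0 := by
    intro h
    rw [h, map_zero] at hK
    exact hKpos.ne' (by exact_mod_cast hK.symm)
  have hcnn : conj (n * n) = n * n := by rw [hcm, hcn]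
  -- product identities
  have P1 : n * expc = n + Complex.I • (n * n) := by
    simp only [expc, Algebra.smul_def, map_mul]
    linear_combination (- algebraMap ℂ A (1/2)) * hn3
  have P2 : (n * n) * expc = n * n := by
    simp only [expc, Algebra.smul_def, map_mul]
    linear_combination algebraMap ℂ A Complex.I * hn3 - algebraMap ℂ A (1/2) * hn4
  have P3 : ∀ x : A, x * n = 0 → x * expc = x := by
    intro x hx
    simp only [expc, Algebra.smul_def, map_mul]
    linear_combination (algebraMap ℂ A Complex.I - algebraMap ℂ A (1/2) * n) * hx
  have P5 : expc * expc = 1 + ((2*Complex.I : ℂ)) • n - ((2:ℂ)) • (n * n) := by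
    simp only [expc, Algebra.smul_def, map_mul, map_ofNat]
    linear_combination (n*n) * hi - (n*n) * h2 -
      2 * algebraMap ℂ A Complex.I * algebraMap ℂ A (1/2) * hn3 +
      algebraMap ℂ A (1/2) * algebraMap ℂ A (1/2) * hn4
  have P6 : ∀ v ∈ H2, v * (expc * expc) = v + (2*Complex.I : ℂ) • (v * n) := by
    intro v hv
    have hv4 : v * (n * n) = 0 := hmul24 v hv _ hm4
    rw [P5]
    simp only [Algebra.smul_def, map_mul, map_ofNat]
    linear_combination (-2 : A) * hv4
  have P8 : n * (expc * expc) = n + (2*Complex.I : ℂ) • (n * n) := P6 n hn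
  -- Rpts and conjAR basics
  have hRpts : ∀ x : A, x ∈ Rpts ↔ conj x = x := by
    intro x
    simp only [Rpts, LinearMap.mem_ker, LinearMap.sub_apply, LinearMap.id_apply, sub_eq_zero]
  have hcAR : ∀ y : A, conjAR y = conj y * (expc * expc) := fun y => rfl
  have hARmem : ∀ x ∈ Rpts, x * expc ∈ ARsub := fun x hx => ⟨x, hx, rfl⟩
  have hconj1 : ∀ α : ℂ, conj (α • (1:A)) = (starRingEnd ℂ α) • (1:A) := by
    intro α; rw [hca, hc1]
  have hcARone : ∀ α : ℂ, conjAR (α • (1:A)) =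
      (starRingEnd ℂ α) • (1:A) + ((starRingEnd ℂ α) * (2*Complex.I)) • n +
        ((starRingEnd ℂ α) * (-2)) • (n * n) := by
    intro α
    rw [hcAR, hconj1, smul_mul_assoc, one_mul, P5]
    module
  have hcARH2 : ∀ v ∈ H2, conjAR (conj v) = v + (2*Complex.I : ℂ) • (v * n) := by
    intro v hv
    rw [hcAR, hcc, P6 v hv]
  -- splitting into real and imaginary parts
  have hsplit : ∀ (S : Submodule ℂ A), (∀ x ∈ S, conj x ∈ S) → ∀ x ∈ S,
      ∃ u v : A, (u ∈ Rpts ⊓ S.restrictScalars ℝ) ∧ (v ∈ Rpts ⊓ S.restrictScalars ℝ) ∧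
        x = u + Complex.I • v := by
    intro S hS x hx
    have h12 : starRingEnd ℂ (1/2 : ℂ) = (1/2 : ℂ) := by
      rw [map_div₀, map_one, map_ofNat]
    have e1 : starRingEnd ℂ (-(Complex.I)/2 : ℂ) = (Complex.I/2 : ℂ) := by
      rw [map_div₀, map_neg, Complex.conj_I, map_ofNat, neg_neg]
    have e2 : starRingEnd ℂ (Complex.I/2 : ℂ) = (-(Complex.I)/2 : ℂ) := by
      rw [map_div₀, Complex.conj_I, map_ofNat]
    refine ⟨(1/2:ℂ) • x + (1/2:ℂ) • conj x,
      (-(Complex.I)/2 : ℂ) • x + (Complex.I/2 : ℂ) • conj x,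
      Submodule.mem_inf.mpr ⟨?_, ?_⟩, Submodule.mem_inf.mpr ⟨?_, ?_⟩, ?_⟩
    · exact (hRpts _).mpr (by rw [map_add, hca, hca, hcc, h12, add_comm])
    · exact Submodule.add_mem _ (Submodule.smul_mem _ _ hx) (Submodule.smul_mem _ _ (hS x hx))
    · exact (hRpts _).mpr (by rw [map_add, hca, hca, hcc, e1, e2, add_comm])
    · exact Submodule.add_mem _ (Submodule.smul_mem _ _ hx) (Submodule.smul_mem _ _ (hS x hx))
    · rw [smul_add, smul_smul, smul_smul]
      rw [show Complex.I * (-(Complex.I)/2) = (1/2 : ℂ) by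
        linear_combination (-1/2 : ℂ) * Complex.I_mul_I,
        show Complex.I * (Complex.I/2) = (-(1/2) : ℂ) by
        linear_combination (1/2 : ℂ) * Complex.I_mul_I]
      module
  have hprimstab : ∀ x ∈ prim, conj x ∈ prim := by
    intro x hx
    obtain ⟨hx2, hxk⟩ := Submodule.mem_inf.mp hx
    refine Submodule.mem_inf.mpr ⟨hcH2 x hx2, ?_⟩
    rw [LinearMap.mem_ker, LinearMap.mulRight_apply] at hxk ⊢
    rw [← hcn, ← hcm, hxk, map_zero]
  have hprimspan : prim ≤ Submodule.span ℂ (primR : Set A) := by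
    intro x hx
    obtain ⟨u, v, hu, hv, rfl⟩ := hsplit prim hprimstab x hx
    exact Submodule.add_mem _ (Submodule.subset_span hu)
      (Submodule.smul_mem _ _ (Submodule.subset_span hv))
  have h12' : starRingEnd ℂ (1/2 : ℂ) = (1/2 : ℂ) := by
    rw [map_div₀, map_one, map_ofNat]
  have hcexp : conj expc = 1 - Complex.I • n - (1/2 : ℂ) • (n * n) := by
    simp only [expc]
    rw [map_sub, map_add, hc1, hca, hca, hcn, hcnn, Complex.conj_I, h12', neg_smul,
      ← sub_eq_add_neg]
  have P4 : expc * (1 - Complex.I • n - (1/2 : ℂ) • (n * n)) = 1 := by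
    simp only [expc, Algebra.smul_def, map_mul]
    linear_combination (- (n*n)) * hi - (n*n) * (algebraMap ℂ A (1/2)) * h2 +
      algebraMap ℂ A (1/2) * algebraMap ℂ A (1/2) * hn4 +
      (-(n*n) + (n*n) * algebraMap ℂ A (1/2)) * h2
  have hinv : ∀ x : A, conjAR (conjAR x) = x := by
    intro x
    rw [hcAR, hcAR, hcm, hcm, hcc, hcexp]
    linear_combination (x * ((1 - Complex.I • n - (1/2 : ℂ) • (n * n)) * expc + 1)) * P4
  -- uniqueness of components
  have huniq : ∀ a b v v' w w' : A, a ∈ H0 → b ∈ H0 → v ∈ H2 → v' ∈ H2 → w ∈ H4 → w' ∈ H4 →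
      a + v + w = b + v' + w' → a = b ∧ v = v' ∧ w = w' := by
    intro a b v v' w w' ha hb hv hv' hw hw' heq
    have h0 : (a - b) + (v - v') + (w - w') = 0 := by linear_combination heq
    obtain ⟨e1, e2, e3⟩ := hindep _ (sub_mem ha hb) _ (sub_mem hv hv') _ (sub_mem hw hw') h0
    exact ⟨sub_eq_zero.mp e1, sub_eq_zero.mp e2, sub_eq_zero.mp e3⟩
  have hdecomp : ∀ x : A, ∃ a ∈ H0, ∃ v ∈ H2, ∃ w ∈ H4, x = a + v + w := by
    intro x
    have hx : x ∈ H0 ⊔ H2 ⊔ H4 := by rw [hsum]; trivial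
    rcases Submodule.mem_sup.mp hx with ⟨y, hy, w, hw, hx'⟩
    rcases Submodule.mem_sup.mp hy with ⟨a, ha, v, hv, hy'⟩
    exact ⟨a, ha, v, hv, w, hw, by rw [← hx', ← hy']⟩
  have hH0eq : ∀ a ∈ H0, ∃ α : ℂ, a = α • (1:A) := by
    intro a ha
    rw [hH0] at ha
    rcases Submodule.mem_span_singleton.mp ha with ⟨α, hα⟩
    exact ⟨α, hα.symm⟩
  -- values of F
  have hF0 : ∀ p : ℤ, p ≤ 0 → F p = ⊤ := by intro p hp; simp only [F]; rw [if_pos hp]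
  have hF1 : F 1 = H0 ⊔ H2 := by simp only [F]; norm_num
  have hF2 : F 2 = H0 := by simp only [F]; norm_num
  have hF3 : ∀ p : ℤ, 3 ≤ p → F p = ⊥ := by
    intro p hp; simp only [F]
    rw [if_neg (by omega), if_neg (by omega), if_neg (by omega)]
  -- values of W
  have hWb : ∀ l : ℤ, l ≤ 0 → W l = ⊥ := by intro l hl; simp only [W]; rw [if_pos hl]
  have hW1 : W 1 = Submodule.span ℝ {n + Complex.I • (n * n), n * n} := by
    simp only [W]; norm_num
  have hW2 : W 2 = Submodule.span ℝ {n + Complex.I • (n * n), n * n} ⊔ primR := by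
    simp only [W]; norm_num
  have hW3 : W 3 = Submodule.span ℝ {n + Complex.I • (n * n), n * n} ⊔ primR := by
    simp only [W]; norm_num
  have hW4 : ∀ l : ℤ, 4 ≤ l → W l = ARsub := by
    intro l hl; simp only [W]
    rw [if_neg (by omega), if_neg (by omega), if_neg (by omega)]
  -- values of WC
  have hWCb : ∀ l : ℤ, l ≤ 0 → WC l = ⊥ := by
    intro l hl; simp only [WC]; rw [hWb l hl]
    simp
  have hWC1 : WC 1 = Submodule.span ℂ {n, n * n} := by
    simp only [WC]; rw [hW1]
    apply le_antisymm
    · rw [Submodule.span_le]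
      intro x hx
      have hx' : x ∈ Submodule.span ℝ {n + Complex.I • (n * n), n * n} := hx
      have : Submodule.span ℝ {n + Complex.I • (n * n), n * n} ≤
          (Submodule.span ℂ {n, n * n}).restrictScalars ℝ := by
        rw [Submodule.span_le]
        rintro y hy
        rcases hy with h | h
        · rw [h]
          exact add_mem (Submodule.subset_span (by simp))
            (Submodule.smul_mem _ _ (Submodule.subset_span (by simp)))
        · rw [Set.mem_singleton_iff] at h
          rw [h]
          exact Submodule.subset_span (by simp)
      exact this hx'
    · rw [Submodule.span_le]
      rintro y hy
      have hgen1 : (n + Complex.I • (n * n)) ∈ Submodule.span ℂ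
          ((Submodule.span ℝ {n + Complex.I • (n * n), n * n} : Submodule ℝ A) : Set A) :=
        Submodule.subset_span (Submodule.subset_span (by left; rfl))
      have hgen2 : (n * n) ∈ Submodule.span ℂ
          ((Submodule.span ℝ {n + Complex.I • (n * n), n * n} : Submodule ℝ A) : Set A) :=
        Submodule.subset_span (Submodule.subset_span (by right; rfl))
      rcases hy with h | h
      · rw [h]
        simpa using sub_mem hgen1 (Submodule.smul_mem _ Complex.I hgen2)
      · rw [Set.mem_singleton_iff] at h
        rw [h]
        exact hgen2
  have hH4le : H4 ≤ Submodule.span ℂ {n, n * n} := by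
    rw [hH4]
    exact Submodule.span_mono (by simp)
  have hWC23 : ∀ l : ℤ, W l = Submodule.span ℝ {n + Complex.I • (n * n), n * n} ⊔ primR →
      WC l = H2 ⊔ H4 := by
    intro l hWl
    simp only [WC]; rw [hWl]
    apply le_antisymm
    · rw [Submodule.span_le]
      intro x hx
      have hx' : x ∈ Submodule.span ℝ {n + Complex.I • (n * n), n * n} ⊔ primR := hx
      rcases Submodule.mem_sup.mp hx' with ⟨y, hy, z, hz, rfl⟩
      have hyle : Submodule.span ℝ {n + Complex.I • (n * n), n * n} ≤
          (H2 ⊔ H4).restrictScalars ℝ := by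
        rw [Submodule.span_le]
        rintro y (h | h)
        · rw [h]
          exact add_mem (Submodule.mem_sup_left hn)
            (Submodule.smul_mem _ _ (Submodule.mem_sup_right hm4))
        · rw [Set.mem_singleton_iff] at h
          rw [h]
          exact Submodule.mem_sup_right hm4
      have hy' : y ∈ (H2 ⊔ H4).restrictScalars ℝ := hyle hy
      have hz' : z ∈ H2 := (Submodule.mem_inf.mp hz).2.1
      exact add_mem (SetLike.mem_coe.mpr hy') (SetLike.mem_coe.mpr
        (Submodule.mem_sup_left hz' : z ∈ H2 ⊔ H4))
    · have hg1 : (n + Complex.I • (n * n)) ∈ Submodule.span ℂ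
          ((Submodule.span ℝ {n + Complex.I • (n * n), n * n} ⊔ primR : Submodule ℝ A) : Set A) :=
        Submodule.subset_span (Submodule.mem_sup_left (Submodule.subset_span (by left; rfl)))
      have hg2 : (n * n) ∈ Submodule.span ℂ
          ((Submodule.span ℝ {n + Complex.I • (n * n), n * n} ⊔ primR : Submodule ℝ A) : Set A) :=
        Submodule.subset_span (Submodule.mem_sup_left (Submodule.subset_span (by right; rfl)))
      have hgn : n ∈ Submodule.span ℂ
          ((Submodule.span ℝ {n + Complex.I • (n * n), n * n} ⊔ primR : Submodule ℝ A) : Set A) := by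
        simpa using sub_mem hg1 (Submodule.smul_mem _ Complex.I hg2)
      refine sup_le ?_ ?_
      · nth_rewrite 1 [hlef]
        refine sup_le ?_ ?_
        · refine le_trans (show prim ≤ Submodule.span ℂ (primR : Set A) from hprimspan) ?_
          exact Submodule.span_mono (SetLike.coe_subset_coe.mpr le_sup_right)
        · rw [Submodule.span_le]
          rintro y h
          rw [Set.mem_singleton_iff] at h
          rw [h]
          exact hgn
      · rw [hH4, Submodule.span_le]
        rintro y h
        rw [Set.mem_singleton_iff] at h
        rw [h]
        exact hg2
  have hWC2 : WC 2 = H2 ⊔ H4 := hWC23 2 hW2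
  have hWC3 : WC 3 = H2 ⊔ H4 := hWC23 3 hW3
  have hWC4 : ∀ l : ℤ, 4 ≤ l → WC l = ⊤ := by
    intro l hl
    simp only [WC]; rw [hW4 l hl]
    rw [eq_top_iff]
    intro x _
    have hx : x = (x * (1 - Complex.I • n - (1/2 : ℂ) • (n * n))) * expc := by
      linear_combination (-x) * P4
    obtain ⟨u, v, hu, hv, huv⟩ := hsplit ⊤ (fun y _ => trivial) (x * (1 - Complex.I • n - (1/2 : ℂ) • (n * n))) trivial
    have hx2 : x = u * expc + Complex.I • (v * expc) := by
      rw [hx, huv, add_mul, smul_mul_assoc]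
    rw [hx2]
    exact add_mem (Submodule.subset_span (hARmem u (Submodule.mem_inf.mp hu).1))
      (Submodule.smul_mem _ _ (Submodule.subset_span (hARmem v (Submodule.mem_inf.mp hv).1)))
  -- Goal 1 ingredients
  have hnR : n ∈ Rpts := (hRpts n).mpr hcn
  have hmR : n * n ∈ Rpts := (hRpts _).mpr hcnn
  have hspan1AR : Submodule.span ℝ {n + Complex.I • (n * n), n * n} ≤ ARsub := by
    rw [Submodule.span_le]
    rintro y (h | h)
    · rw [h]
      have := hARmem n hnR
      rwa [P1] at this
    · rw [Set.mem_singleton_iff] at h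
      rw [h]
      have := hARmem _ hmR
      rwa [P2] at this
  have hprimRAR : primR ≤ ARsub := by
    intro x hx
    obtain ⟨hxR, hxp⟩ := Submodule.mem_inf.mp hx
    have hxn : x * n = 0 := by
      have := (Submodule.mem_inf.mp hxp).2
      rwa [LinearMap.mem_ker, LinearMap.mulRight_apply] at this
    have := hARmem x hxR
    rwa [P3 x hxn] at this
  have hWAR : ∀ l : ℤ, W l ≤ ARsub := by
    intro l
    rcases le_or_gt l 0 with h | h
    · rw [hWb l h]; exact bot_le
    · rcases eq_or_lt_of_le (show (1:ℤ) ≤ l by omega) with h1 | h1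
      · rw [show l = 1 by omega, hW1]; exact hspan1AR
      · rcases le_or_gt l 3 with h3 | h3
        · rw [show W l = Submodule.span ℝ {n + Complex.I • (n * n), n * n} ⊔ primR by
            rcases (by omega : l = 2 ∨ l = 3) with rfl | rfl
            exacts [hW2, hW3]]
          exact sup_le hspan1AR hprimRAR
        · rw [hW4 l (by omega)]
  -- Goal 2 : Monotone W
  have hWmono : Monotone W := by
    apply monotone_int_of_le_succ
    intro l
    rcases le_or_gt l 0 with h | h
    · rw [hWb l h]; exact bot_le
    · rcases eq_or_lt_of_le (show (1:ℤ) ≤ l by omega) with h1 | h1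
      · rw [show l = 1 by omega, show (1:ℤ)+1 = 2 by norm_num, hW1, hW2]
        exact le_sup_left
      · rcases (by omega : l = 2 ∨ l = 3 ∨ 4 ≤ l) with rfl | h3
        · rw [show (2:ℤ)+1 = 3 by norm_num, hW2, hW3]
        · rcases h3 with rfl | h4
          · rw [show (3:ℤ)+1 = 4 by norm_num, hW3, hW4 4 le_rfl]
            exact sup_le hspan1AR hprimRAR
          · rw [hW4 l h4, hW4 (l+1) (by omega)]
  -- Goal 3 : Antitone F
  have hFanti : Antitone F := by
    apply antitone_int_of_succ_le
    intro p
    rcases le_or_gt p (-1) with h | h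
    · rw [hF0 p (by omega), hF0 (p+1) (by omega)]
    · rcases (by omega : p = 0 ∨ p = 1 ∨ p = 2 ∨ 3 ≤ p) with rfl | hp
      · rw [hF0 0 le_rfl]; exact le_top
      · rcases hp with rfl | hp
        · rw [show (1:ℤ)+1 = 2 by norm_num, hF1, hF2]; exact le_sup_left
        · rcases hp with rfl | hp
          · rw [show (2:ℤ)+1 = 3 by norm_num, hF3 3 le_rfl]; exact bot_le
          · rw [hF3 (p+1) (by omega)]; exact bot_le
  have hWCmono : ∀ a b : ℤ, a ≤ b → WC a ≤ WC b := by
    intro a b hab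
    exact Submodule.span_mono (SetLike.coe_subset_coe.mpr (hWmono hab))
  refine ⟨hWAR, hWmono, hFanti, ?_⟩
  -- generic helpers for the opposedness conditions
  have fwd : ∀ k p q : ℤ,
      (F p ⊓ WC k).restrictScalars ℝ ⊔
        (Submodule.map conjAR ((F q).restrictScalars ℝ) ⊓ (WC k).restrictScalars ℝ) ⊔
        (WC (k - 1)).restrictScalars ℝ ≤ (WC k).restrictScalars ℝ := by
    intro k p q
    refine sup_le (sup_le ?_ inf_le_right) ?_
    · intro x hx
      exact (Submodule.mem_inf.mp hx).2
    · intro x hx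
      exact hWCmono (k-1) k (by omega) hx
  have trivK : ∀ k p q : ℤ, WC (k-1) = WC k →
      ((F p ⊓ WC k).restrictScalars ℝ ⊔
          (Submodule.map conjAR ((F q).restrictScalars ℝ) ⊓ (WC k).restrictScalars ℝ) ⊔
          (WC (k - 1)).restrictScalars ℝ = (WC k).restrictScalars ℝ) ∧
        ((F p).restrictScalars ℝ ⊓ Submodule.map conjAR ((F q).restrictScalars ℝ) ⊓
          (WC k).restrictScalars ℝ ≤ (WC (k - 1)).restrictScalars ℝ) := by
    intro k p q h
    constructor
    · refine le_antisymm (fwd k p q) ?_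
      intro x hx
      refine Submodule.mem_sup_right ?_
      show x ∈ (WC (k-1)).restrictScalars ℝ
      rw [h]
      exact hx
    · intro x hx
      show x ∈ (WC (k-1)).restrictScalars ℝ
      rw [h]
      exact (Submodule.mem_inf.mp hx).2
  have Itop1 : ∀ k p q : ℤ, F p = ⊤ →
      ((F p ⊓ WC k).restrictScalars ℝ ⊔
          (Submodule.map conjAR ((F q).restrictScalars ℝ) ⊓ (WC k).restrictScalars ℝ) ⊔
          (WC (k - 1)).restrictScalars ℝ = (WC k).restrictScalars ℝ) := by
    intro k p q h
    refine le_antisymm (fwd k p q) ?_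
    intro x hx
    refine Submodule.mem_sup_left (Submodule.mem_sup_left ?_)
    show x ∈ F p ⊓ WC k
    exact Submodule.mem_inf.mpr ⟨by rw [h]; trivial, hx⟩
  have Itop2 : ∀ k p q : ℤ, F q = ⊤ →
      ((F p ⊓ WC k).restrictScalars ℝ ⊔
          (Submodule.map conjAR ((F q).restrictScalars ℝ) ⊓ (WC k).restrictScalars ℝ) ⊔
          (WC (k - 1)).restrictScalars ℝ = (WC k).restrictScalars ℝ) := by
    intro k p q h
    refine le_antisymm (fwd k p q) ?_
    intro x hx
    refine Submodule.mem_sup_left (Submodule.mem_sup_right (Submodule.mem_inf.mpr ⟨?_, hx⟩))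
    exact ⟨conjAR x, by rw [h]; trivial, hinv x⟩
  have IIbot1 : ∀ k p q : ℤ, F p = ⊥ →
      ((F p).restrictScalars ℝ ⊓ Submodule.map conjAR ((F q).restrictScalars ℝ) ⊓
          (WC k).restrictScalars ℝ ≤ (WC (k - 1)).restrictScalars ℝ) := by
    intro k p q h x hx
    have hx1 : x ∈ F p := (Submodule.mem_inf.mp (Submodule.mem_inf.mp hx).1).1
    rw [h, Submodule.mem_bot] at hx1
    rw [hx1]
    exact Submodule.zero_mem _
  have IIbot2 : ∀ k p q : ℤ, F q = ⊥ →
      ((F p).restrictScalars ℝ ⊓ Submodule.map conjAR ((F q).restrictScalars ℝ) ⊓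
          (WC k).restrictScalars ℝ ≤ (WC (k - 1)).restrictScalars ℝ) := by
    intro k p q h x hx
    obtain ⟨y, hy, hyx⟩ := (Submodule.mem_inf.mp (Submodule.mem_inf.mp hx).1).2
    have : y ∈ F q := hy
    rw [h, Submodule.mem_bot] at this
    rw [← hyx, this, map_zero]
    exact Submodule.zero_mem _
  intro k p q hpq
  rcases le_or_gt k 0 with hk | hk
  · exact trivK k p q (by rw [hWCb (k-1) (by omega), hWCb k hk])
  rcases (by omega : k = 1 ∨ k = 2 ∨ k = 3 ∨ k = 4 ∨ 5 ≤ k) with rfl | rfl | rfl | rfl | hk5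
  · -- k = 1
    have toWC0 : ∀ x : A, x = 0 → x ∈ (WC (1-1)).restrictScalars ℝ := by
      intro x hx
      rw [show (1:ℤ)-1 = 0 by norm_num, hWCb 0 le_rfl, Submodule.restrictScalars_mem,
        Submodule.mem_bot]
      exact hx
    rcases le_or_gt p 0 with hp | hp
    · refine ⟨Itop1 1 p q (hF0 p hp), ?_⟩
      rcases (by omega : q = 2 ∨ 3 ≤ q) with rfl | hq3
      · -- p = 0, q = 2 : conjAR(H0) ∩ WC1 = 0
        intro x hx
        obtain ⟨y, hy, hyx⟩ := (Submodule.mem_inf.mp (Submodule.mem_inf.mp hx).1).2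
        have hy' : y ∈ H0 := by
          have : y ∈ F 2 := hy
          rwa [hF2] at this
        obtain ⟨β, rfl⟩ := hH0eq y hy'
        have hxW : x ∈ WC 1 := (Submodule.mem_inf.mp hx).2
        rw [hWC1, Submodule.mem_span_pair] at hxW
        obtain ⟨s, t, hst⟩ := hxW
        have hxval : x = (starRingEnd ℂ β) • (1:A) + ((starRingEnd ℂ β)*(2*Complex.I)) • n +
            ((starRingEnd ℂ β)*(-2)) • (n*n) := by rw [← hyx, hcARone]
        obtain ⟨hb0, -, -⟩ := huniq 0 ((starRingEnd ℂ β) • (1:A)) (s • n)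
          (((starRingEnd ℂ β)*(2*Complex.I)) • n) (t • (n*n)) (((starRingEnd ℂ β)*(-2)) • (n*n))
          (Submodule.zero_mem _) (Submodule.smul_mem _ _ h1H0)
          (Submodule.smul_mem _ _ hn) (Submodule.smul_mem _ _ hn)
          (Submodule.smul_mem _ _ hm4) (Submodule.smul_mem _ _ hm4)
          (by rw [zero_add, hst]; exact hxval)
        have hzero : ∀ z : A, (starRingEnd ℂ β) • z = 0 := fun z => by
          rw [← one_mul z, ← smul_mul_assoc, ← hb0, zero_mul]
        refine toWC0 x ?_
        simp [hxval, mul_smul, hzero]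
      · exact IIbot2 1 p q (hF3 q hq3)
    rcases (by omega : p = 1 ∨ p = 2 ∨ 3 ≤ p) with rfl | rfl | hp3
    · obtain rfl : q = 1 := by omega
      constructor
      · -- the opposedness on Gr_1
        refine le_antisymm (fwd 1 1 1) ?_
        intro x hx
        have hx' : x ∈ WC 1 := hx
        rw [hWC1, Submodule.mem_span_pair] at hx'
        obtain ⟨s, t, hst⟩ := hx'
        obtain ⟨γ, hγ⟩ : ∃ γ : ℂ, γ * (2*Complex.I) = t :=
          ⟨t / (2*Complex.I), div_mul_cancel₀ t
            (mul_ne_zero two_ne_zero Complex.I_ne_zero)⟩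
        have hdecx : s • n + t • (n*n) =
            (s - γ) • n + γ • (n + (2*Complex.I : ℂ) • (n*n)) := by
          rw [← hγ]
          module
        have hT1 : (s - γ) • n ∈ F 1 ⊓ WC 1 := by
          refine Submodule.mem_inf.mpr ⟨?_, ?_⟩
          · rw [hF1]; exact Submodule.mem_sup_right (Submodule.smul_mem _ _ hn)
          · rw [hWC1]; exact Submodule.smul_mem _ _ (Submodule.subset_span (by simp))
        have hT2 : γ • (n + (2*Complex.I : ℂ) • (n*n)) ∈
            Submodule.map conjAR ((F 1).restrictScalars ℝ) ⊓ (WC 1).restrictScalars ℝ := by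
          refine Submodule.mem_inf.mpr ⟨⟨(starRingEnd ℂ γ) • n, ?_, ?_⟩, ?_⟩
          · show (starRingEnd ℂ γ) • n ∈ F 1
            rw [hF1]; exact Submodule.mem_sup_right (Submodule.smul_mem _ _ hn)
          · rw [hcAR, hca, Complex.conj_conj, hcn, smul_mul_assoc, P8]
          · show _ ∈ WC 1
            rw [hWC1]
            exact Submodule.smul_mem _ _ (add_mem (Submodule.subset_span (by simp))
              (Submodule.smul_mem _ _ (Submodule.subset_span (by simp))))
        rw [← hst, hdecx]
        exact add_mem (Submodule.mem_sup_left (Submodule.mem_sup_left hT1))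
          (Submodule.mem_sup_left (Submodule.mem_sup_right hT2))
      · -- F¹ ∩ conjAR(F¹) ∩ WC₁ = 0
        intro x hx
        have hxF : x ∈ H0 ⊔ H2 := by
          have : x ∈ F 1 := (Submodule.mem_inf.mp (Submodule.mem_inf.mp hx).1).1
          rwa [hF1] at this
        obtain ⟨a, ha, u1, hu1, hxe⟩ := Submodule.mem_sup.mp hxF
        obtain ⟨α, rfl⟩ := hH0eq a ha
        have hxW : x ∈ WC 1 := (Submodule.mem_inf.mp hx).2
        rw [hWC1, Submodule.mem_span_pair] at hxW
        obtain ⟨s, t, hst⟩ := hxW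
        obtain ⟨y, hy, hyx⟩ := (Submodule.mem_inf.mp (Submodule.mem_inf.mp hx).1).2
        have hyF : y ∈ H0 ⊔ H2 := by
          have : y ∈ F 1 := hy
          rwa [hF1] at this
        obtain ⟨b, hb, u, hu, hye⟩ := Submodule.mem_sup.mp hyF
        obtain ⟨β, rfl⟩ := hH0eq b hb
        have hcu : conj u ∈ H2 := hcH2 u hu
        have hcun4 : (conj u) * n ∈ H4 := hmul22 _ hcu n hn
        have hyval : x = (starRingEnd ℂ β) • (1:A) +
            ((conj u) + ((starRingEnd ℂ β)*(2*Complex.I)) • n) +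
            ((2*Complex.I : ℂ) • ((conj u)*n) + ((starRingEnd ℂ β)*(-2)) • (n*n)) := by
          rw [← hyx, ← hye, map_add, hcARone]
          rw [show conjAR u = conj u + (2*Complex.I : ℂ) • ((conj u)*n) from by
            rw [hcAR, P6 _ hcu]]
          abel
        obtain ⟨hα0, hu1s, ht0⟩ := huniq (α • (1:A)) 0 u1 (s • n) 0 (t • (n*n))
          ha (Submodule.zero_mem _) hu1 (Submodule.smul_mem _ _ hn)
          (Submodule.zero_mem _) (Submodule.smul_mem _ _ hm4)
          (by rw [add_zero, zero_add, hxe]; exact hst.symm)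
        obtain ⟨hb0, hvv, hww⟩ := huniq 0 ((starRingEnd ℂ β) • (1:A)) (s • n)
          ((conj u) + ((starRingEnd ℂ β)*(2*Complex.I)) • n) (t • (n*n))
          ((2*Complex.I : ℂ) • ((conj u)*n) + ((starRingEnd ℂ β)*(-2)) • (n*n))
          (Submodule.zero_mem _) (Submodule.smul_mem _ _ h1H0)
          (Submodule.smul_mem _ _ hn) (add_mem hcu (Submodule.smul_mem _ _ hn))
          (Submodule.smul_mem _ _ hm4)
          (add_mem (Submodule.smul_mem _ _ hcun4) (Submodule.smul_mem _ _ hm4))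
          (by rw [zero_add, hst]; exact hyval)
        have hzero : ∀ z : A, (starRingEnd ℂ β) • z = 0 := fun z => by
          rw [← one_mul z, ← smul_mul_assoc, ← hb0, zero_mul]
        have hcu_eq : conj u = s • n := by
          rw [mul_smul, hzero ((2*Complex.I : ℂ) • n), add_zero] at hvv
          exact hvv.symm
        rw [hcu_eq, smul_mul_assoc,
          show ((starRingEnd ℂ β)*(-2:ℂ)) • (n*n) = 0 from by rw [mul_smul]; exact hzero _,
          add_zero] at hww
        have h1 : (2*Complex.I : ℂ) • s • (n*n) = 0 := by rw [← hww]; exact ht0.symm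
        have hs0 : s = 0 := by
          rcases smul_eq_zero.mp h1 with h | h
          · exact absurd h (mul_ne_zero two_ne_zero Complex.I_ne_zero)
          · rcases smul_eq_zero.mp h with h' | h'
            · exact h'
            · exact absurd h' hnn0
        refine toWC0 x ?_
        rw [← hxe, hα0, hu1s, hs0, zero_smul, add_zero]
    · obtain rfl : q = 0 := by omega
      refine ⟨Itop2 1 2 0 (hF0 0 le_rfl), ?_⟩
      intro x hx
      have hxF : x ∈ H0 := by
        have : x ∈ F 2 := (Submodule.mem_inf.mp (Submodule.mem_inf.mp hx).1).1
        rwa [hF2] at this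
      obtain ⟨α, hxα⟩ := hH0eq x hxF
      have hxW : x ∈ WC 1 := (Submodule.mem_inf.mp hx).2
      rw [hWC1, Submodule.mem_span_pair] at hxW
      obtain ⟨s, t, hst⟩ := hxW
      obtain ⟨hα0, -, -⟩ := huniq (α • (1:A)) 0 0 (s • n) 0 (t • (n*n))
        (Submodule.smul_mem _ _ h1H0) (Submodule.zero_mem _) (Submodule.zero_mem _)
        (Submodule.smul_mem _ _ hn) (Submodule.zero_mem _) (Submodule.smul_mem _ _ hm4)
        (by rw [add_zero, add_zero, zero_add, ← hxα]; exact hst.symm)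
      refine toWC0 x ?_
      rw [hxα, hα0]
    · exact ⟨Itop2 1 p q (hF0 q (by omega)), IIbot1 1 p q (hF3 p hp3)⟩
  · -- k = 2
    rcases le_or_gt p 0 with hp | hp
    · exact ⟨Itop1 2 p q (hF0 p hp), IIbot2 2 p q (hF3 q (by omega))⟩
    rcases (by omega : p = 1 ∨ p = 2 ∨ 3 ≤ p) with rfl | rfl | hp3
    · obtain rfl : q = 2 := by omega
      constructor
      · refine le_antisymm (fwd 2 1 2) ?_
        intro x hx
        have hx' : x ∈ H2 ⊔ H4 := by
          have : x ∈ WC 2 := hx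
          rwa [hWC2] at this
        obtain ⟨v, hv, w, hw, rfl⟩ := Submodule.mem_sup.mp hx'
        refine add_mem (Submodule.mem_sup_left (Submodule.mem_sup_left
          (Submodule.mem_inf.mpr ⟨?_, ?_⟩))) (Submodule.mem_sup_right ?_)
        · rw [hF1]; exact Submodule.mem_sup_right hv
        · rw [hWC2]; exact Submodule.mem_sup_left hv
        · show w ∈ (WC (2-1)).restrictScalars ℝ
          rw [show (2:ℤ)-1 = 1 by norm_num, Submodule.restrictScalars_mem, hWC1]
          exact hH4le hw
      · intro x hx
        obtain ⟨y, hy, hyx⟩ := (Submodule.mem_inf.mp (Submodule.mem_inf.mp hx).1).2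
        have hy' : y ∈ H0 := by
          have : y ∈ F 2 := hy
          rwa [hF2] at this
        obtain ⟨β, rfl⟩ := hH0eq y hy'
        have hxF : x ∈ H0 ⊔ H2 := by
          have : x ∈ F 1 := (Submodule.mem_inf.mp (Submodule.mem_inf.mp hx).1).1
          rwa [hF1] at this
        obtain ⟨a, ha, u1, hu1, hxe⟩ := Submodule.mem_sup.mp hxF
        have hxval : x = (starRingEnd ℂ β) • (1:A) + ((starRingEnd ℂ β)*(2*Complex.I)) • n +
            ((starRingEnd ℂ β)*(-2)) • (n*n) := by rw [← hyx, hcARone]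
        obtain ⟨-, -, hw0⟩ := huniq a ((starRingEnd ℂ β) • (1:A)) u1
          (((starRingEnd ℂ β)*(2*Complex.I)) • n) 0 (((starRingEnd ℂ β)*(-2)) • (n*n))
          ha (Submodule.smul_mem _ _ h1H0) hu1 (Submodule.smul_mem _ _ hn)
          (Submodule.zero_mem _) (Submodule.smul_mem _ _ hm4)
          (by rw [add_zero, hxe]; exact hxval)
        have hβ0 : starRingEnd ℂ β = 0 := by
          rcases smul_eq_zero.mp hw0.symm with h | h
          · rcases mul_eq_zero.mp h with h' | h'
            · exact h'
            · exact absurd h' (by norm_num)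
          · exact absurd h hnn0
        have hx0 : x = 0 := by rw [hxval, hβ0]; simp
        show x ∈ (WC (2-1)).restrictScalars ℝ
        rw [hx0]
        exact Submodule.zero_mem _
    · obtain rfl : q = 1 := by omega
      constructor
      · refine le_antisymm (fwd 2 2 1) ?_
        intro x hx
        have hx' : x ∈ H2 ⊔ H4 := by
          have : x ∈ WC 2 := hx
          rwa [hWC2] at this
        obtain ⟨v, hv, w, hw, rfl⟩ := Submodule.mem_sup.mp hx'
        have hvn4 : v * n ∈ H4 := hmul22 v hv n hn
        have hsplitx : v + w = (v + (2*Complex.I : ℂ) • (v*n)) +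
            (w - (2*Complex.I : ℂ) • (v*n)) := by abel
        rw [hsplitx]
        refine add_mem (Submodule.mem_sup_left (Submodule.mem_sup_right
          (Submodule.mem_inf.mpr ⟨⟨conj v, ?_, hcARH2 v hv⟩, ?_⟩)))
          (Submodule.mem_sup_right ?_)
        · show conj v ∈ F 1
          rw [hF1]; exact Submodule.mem_sup_right (hcH2 v hv)
        · show _ ∈ WC 2
          rw [hWC2]
          exact add_mem (Submodule.mem_sup_left hv)
            (Submodule.smul_mem _ _ (Submodule.mem_sup_right hvn4))
        · show _ ∈ (WC (2-1)).restrictScalars ℝ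
          rw [show (2:ℤ)-1 = 1 by norm_num, Submodule.restrictScalars_mem, hWC1]
          exact hH4le (sub_mem hw (Submodule.smul_mem _ _ hvn4))
      · intro x hx
        have hxF : x ∈ H0 := by
          have : x ∈ F 2 := (Submodule.mem_inf.mp (Submodule.mem_inf.mp hx).1).1
          rwa [hF2] at this
        obtain ⟨α, hxα⟩ := hH0eq x hxF
        have hxW : x ∈ H2 ⊔ H4 := by
          have : x ∈ WC 2 := (Submodule.mem_inf.mp hx).2
          rwa [hWC2] at this
        obtain ⟨v, hv, w, hw, hvw⟩ := Submodule.mem_sup.mp hxW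
        obtain ⟨hα0, -, -⟩ := huniq (α • (1:A)) 0 0 v 0 w
          (Submodule.smul_mem _ _ h1H0) (Submodule.zero_mem _) (Submodule.zero_mem _) hv
          (Submodule.zero_mem _) hw
          (by rw [add_zero, add_zero, zero_add, ← hxα]; exact hvw.symm)
        show x ∈ (WC (2-1)).restrictScalars ℝ
        rw [hxα, hα0]
        exact Submodule.zero_mem _
    · exact ⟨Itop2 2 p q (hF0 q (by omega)), IIbot1 2 p q (hF3 p hp3)⟩
  · -- k = 3
    exact trivK 3 p q (by rw [show (3:ℤ)-1 = 2 by norm_num, hWC2, hWC3])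
  · -- k = 4
    have k4mid : ∀ p' q' : ℤ, ((starRingEnd ℂ) : ℂ →+* ℂ) = (starRingEnd ℂ) → (∀ α : ℂ, α • (1:A) ∈ F q') →
        ((F p' ⊓ WC 4).restrictScalars ℝ ⊔
          (Submodule.map conjAR ((F q').restrictScalars ℝ) ⊓ (WC 4).restrictScalars ℝ) ⊔
          (WC (4 - 1)).restrictScalars ℝ = (WC 4).restrictScalars ℝ) := by
      intro p' q' _ hq'
      refine le_antisymm (fwd 4 p' q') ?_
      intro x _
      obtain ⟨a, ha, v, hv, w, hw, rfl⟩ := hdecomp x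
      obtain ⟨α, rfl⟩ := hH0eq a ha
      have hval : conjAR ((starRingEnd ℂ α) • (1:A)) =
          α • (1:A) + (α*(2*Complex.I)) • n + (α*(-2)) • (n*n) := by
        rw [hcARone, Complex.conj_conj]
      have hre : α • (1:A) + v + w =
          (α • (1:A) + (α*(2*Complex.I)) • n + (α*(-2)) • (n*n)) +
            ((v - (α*(2*Complex.I)) • n) + (w - (α*(-2)) • (n*n))) := by abel
      rw [hre]
      refine add_mem (Submodule.mem_sup_left (Submodule.mem_sup_right
        (Submodule.mem_inf.mpr ⟨⟨(starRingEnd ℂ α) • (1:A), hq' _, hval⟩, ?_⟩)))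
        (Submodule.mem_sup_right ?_)
      · show _ ∈ WC 4
        rw [hWC4 4 (by norm_num)]; trivial
      · show _ ∈ (WC (4-1)).restrictScalars ℝ
        rw [show (4:ℤ)-1 = 3 by norm_num, Submodule.restrictScalars_mem, hWC3]
        exact add_mem (Submodule.mem_sup_left (sub_mem hv (Submodule.smul_mem _ _ hn)))
          (Submodule.mem_sup_right (sub_mem hw (Submodule.smul_mem _ _ hm4)))
    rcases le_or_gt p 0 with hp | hp
    · exact ⟨Itop1 4 p q (hF0 p hp), IIbot2 4 p q (hF3 q (by omega))⟩
    rcases (by omega : p = 1 ∨ p = 2 ∨ p = 3 ∨ p = 4 ∨ 5 ≤ p) with rfl | rfl | rfl | rfl | hp5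
    · obtain rfl : q = 4 := by omega
      refine ⟨?_, IIbot2 4 1 4 (hF3 4 (by norm_num))⟩
      refine le_antisymm (fwd 4 1 4) ?_
      intro x _
      obtain ⟨a, ha, v, hv, w, hw, rfl⟩ := hdecomp x
      refine add_mem (Submodule.mem_sup_left (Submodule.mem_sup_left
        (Submodule.mem_inf.mpr ⟨?_, ?_⟩))) (Submodule.mem_sup_right ?_)
      · rw [hF1]; exact add_mem (Submodule.mem_sup_left ha) (Submodule.mem_sup_right hv)
      · rw [hWC4 4 (by norm_num)]; trivial
      · show w ∈ (WC (4-1)).restrictScalars ℝ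
        rw [show (4:ℤ)-1 = 3 by norm_num, Submodule.restrictScalars_mem, hWC3]
        exact Submodule.mem_sup_right hw
    · obtain rfl : q = 3 := by omega
      refine ⟨?_, IIbot2 4 2 3 (hF3 3 le_rfl)⟩
      refine le_antisymm (fwd 4 2 3) ?_
      intro x _
      obtain ⟨a, ha, v, hv, w, hw, rfl⟩ := hdecomp x
      rw [add_assoc]
      refine add_mem (Submodule.mem_sup_left (Submodule.mem_sup_left
        (Submodule.mem_inf.mpr ⟨?_, ?_⟩))) (Submodule.mem_sup_right ?_)
      · rw [hF2]; exact ha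
      · rw [hWC4 4 (by norm_num)]; trivial
      · show v + w ∈ (WC (4-1)).restrictScalars ℝ
        rw [show (4:ℤ)-1 = 3 by norm_num, Submodule.restrictScalars_mem, hWC3]
        exact add_mem (Submodule.mem_sup_left hv) (Submodule.mem_sup_right hw)
    · obtain rfl : q = 2 := by omega
      exact ⟨k4mid 3 2 rfl (fun α => by rw [hF2]; exact Submodule.smul_mem _ _ h1H0),
        IIbot1 4 3 2 (hF3 3 le_rfl)⟩
    · obtain rfl : q = 1 := by omega
      exact ⟨k4mid 4 1 rfl (fun α => by
          rw [hF1]; exact Submodule.mem_sup_left (Submodule.smul_mem _ _ h1H0)),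
        IIbot1 4 4 1 (hF3 4 (by norm_num))⟩
    · exact ⟨Itop2 4 p q (hF0 q (by omega)), IIbot1 4 p q (hF3 p (by omega))⟩
  · -- k ≥ 5
    exact trivK k p q (by rw [hWC4 (k-1) (by omega), hWC4 k (by omega)])
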